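/- If a continuous semiflow on a Riemannian manifold M admits a proper continuous function V and a subset S ⊆ M such that V is constant on each connected component of S, each connected component of S is isolated (open in S), and V is strictly decreasing along trajectories outside S, then the chain recurrent set of Φ is contained in S. -/

import Mathlib

/-- An autonomous continuous semiflow on a metric space. -/
structure Semiflow (M : Type*) [MetricSpace M] where
  toFun : ℝ → M → M
  cont : Continuous fun p : ℝ × M => toFun p.1 p.2
  map_zero : ∀ x, toFun 0 x = x
  map_add : ∀ {s t : ℝ}, 0 ≤ s → 0 ≤ t → ∀ x, toFun t (toFun s x) = toFun (t + s) x

/-- A closed `(ε, T)`-chain at `x`. -/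
def Semiflow.IsChain {M : Type*} [MetricSpace M] (Φ : Semiflow M) (ε T : ℝ) (x : M) : Prop :=
  ∃ (n : ℕ) (xs : Fin (n + 1) → M) (ts : Fin n → ℝ),
    0 < n ∧ xs 0 = x ∧ xs (Fin.last n) = x ∧
    ∀ i : Fin n, T < ts i ∧ dist (Φ.toFun (ts i) (xs i.castSucc)) (xs i.succ) < ε

/-- The chain recurrent set of a semiflow. -/
def Semiflow.chainRecurrentSet {M : Type*} [MetricSpace M] (Φ : Semiflow M) : Set M :=
  {x | ∀ ε T : ℝ, 0 < ε → 0 < T → Φ.IsChain ε T x}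

/-- The equilibrium set of a semiflow. -/
def Semiflow.equilibria {M : Type*} [MetricSpace M] (Φ : Semiflow M) : Set M :=
  {x | ∀ t : ℝ, 0 ≤ t → Φ.toFun t x = x}

lemma Semiflow.flow_cont {M : Type*} [MetricSpace M] (Φ : Semiflow M) (y : M) :
    Continuous fun s : ℝ => Φ.toFun s y :=
  Φ.cont.comp (continuous_id.prodMk continuous_const)

lemma flow_mono {M : Type*} [MetricSpace M] (Φ : Semiflow M) (V : M → ℝ) (S : Set M)
    (hVcont : Continuous V)
    (hconst : ∀ x ∈ S, ∀ y ∈ connectedComponentIn S x, V y = V x)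
    (hdec : ∀ x ∉ S, ∀ t : ℝ, 0 < t → V (Φ.toFun t x) < V x) :
    ∀ (y : M) (t : ℝ), 0 ≤ t → V (Φ.toFun t y) ≤ V y := by
  intro y t ht
  by_contra hcon
  push_neg at hcon
  set g : ℝ → ℝ := fun s => V (Φ.toFun s y) with hg
  have hgc : Continuous g := hVcont.comp (Φ.flow_cont y)
  have hg0 : g 0 = V y := by simp [hg, Φ.map_zero]
  have hgt : g 0 < g t := by rw [hg0]; exact hcon
  have ht0 : 0 < t := by
    rcases ht.lt_or_eq with h | h
    · exact h
    · exfalso; rw [← h] at hgt; exact lt_irrefl _ hgt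
  set A : Set ℝ := Set.Icc 0 t ∩ g ⁻¹' Set.Iic (g 0) with hA
  have hAclosed : IsClosed A := isClosed_Icc.inter (isClosed_Iic.preimage hgc)
  have hAne : A.Nonempty := ⟨0, ⟨le_refl _, le_of_lt ht0⟩, Set.mem_preimage.mpr Set.self_mem_Iic⟩
  have hAbdd : BddAbove A := ⟨t, fun u hu => hu.1.2⟩
  set c1 := sSup A with hc1
  have hc1A : c1 ∈ A := hAclosed.csSup_mem hAne hAbdd
  have hc1le : g c1 ≤ g 0 := hc1A.2
  have hc10 : 0 ≤ c1 := hc1A.1.1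
  have hc1t : c1 < t := by
    rcases hc1A.1.2.lt_or_eq with h | h
    · exact h
    · exfalso; rw [h] at hc1le; exact absurd hgt (not_lt.mpr hc1le)
  have hgt' : ∀ u, c1 < u → u ≤ t → g 0 < g u := by
    intro u hu hut
    by_contra hle
    push_neg at hle
    exact absurd (le_csSup hAbdd ⟨⟨le_trans hc10 hu.le, hut⟩, hle⟩) (not_le.mpr hu)
  by_cases hS : ∃ δ > 0, ∀ u, c1 < u → u < c1 + δ → Φ.toFun u y ∈ S
  · obtain ⟨δ, hδ, hδS⟩ := hS
    obtain ⟨δ', hδ'0, hδ'1, hδ'2⟩ : ∃ δ' : ℝ, 0 < δ' ∧ δ' ≤ δ ∧ δ' ≤ t - c1 :=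
      ⟨min δ (t - c1), lt_min hδ (by linarith), min_le_left _ _, min_le_right _ _⟩
    obtain ⟨u0, hu0⟩ : ∃ u0 : ℝ, u0 = c1 + δ' / 2 := ⟨_, rfl⟩
    have hu0mem : u0 ∈ Set.Ioo c1 (c1 + δ') := ⟨by linarith, by linarith⟩
    have hsubS : ∀ u ∈ Set.Ioo c1 (c1 + δ'), Φ.toFun u y ∈ S := by
      intro u hu
      exact hδS u hu.1 (by linarith [hu.2])
    obtain ⟨z, hz⟩ : ∃ z : M, z = Φ.toFun u0 y := ⟨_, rfl⟩
    have hzS : z ∈ S := by rw [hz]; exact hsubS u0 hu0mem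
    have hseg : (fun u => Φ.toFun u y) '' Set.Ioo c1 (c1 + δ') ⊆ connectedComponentIn S z := by
      apply IsPreconnected.subset_connectedComponentIn
      · exact isPreconnected_Ioo.image _ (Φ.flow_cont y).continuousOn
      · exact ⟨u0, hu0mem, hz.symm⟩
      · rintro w ⟨u, hu, rfl⟩; exact hsubS u hu
    have hconstg : ∀ u ∈ Set.Ioo c1 (c1 + δ'), g u = V z := by
      intro u hu
      exact hconst z hzS _ (hseg ⟨u, hu, rfl⟩)
    -- g c1 = V z by continuity from the right
    have h1 : Filter.Tendsto g (nhdsWithin c1 (Set.Ioi c1)) (nhds (g c1)) :=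
      (hgc.continuousAt).continuousWithinAt
    have h2 : Filter.Tendsto g (nhdsWithin c1 (Set.Ioi c1)) (nhds (V z)) := by
      apply Filter.Tendsto.congr' _ tendsto_const_nhds
      filter_upwards [Ioo_mem_nhdsGT_of_mem (⟨le_refl _, by linarith⟩ : c1 ∈ Set.Ico c1 (c1 + δ'))] with u hu
      exact (hconstg u hu).symm
    have : g c1 = V z := tendsto_nhds_unique h1 h2
    have hu0t : u0 ≤ t := by linarith
    have := hgt' u0 hu0mem.1 hu0t
    rw [hconstg u0 hu0mem] at this
    linarith [hc1le, this, ‹g c1 = V z›]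
  · push_neg at hS
    have key : ∀ ρ > 0, g t < g c1 + ρ := by
      intro ρ hρ
      have := (Metric.continuous_iff.mp hgc) c1 ρ hρ
      obtain ⟨δ, hδ, hδρ⟩ := this
      obtain ⟨u, hu1, hu2, huS⟩ := hS (min δ (t - c1)) (lt_min hδ (by linarith))
      have hut : u < t := by
        have := min_le_right δ (t - c1); linarith
      have hgu : g u < g c1 + ρ := by
        have hd : dist u c1 < δ := by
          rw [Real.dist_eq, abs_of_pos (by linarith)]
          have := min_le_left δ (t - c1); linarith
        have := hδρ u hd
        rw [Real.dist_eq] at this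
        have := abs_lt.mp this
        linarith [this.1, this.2]
      have hflow : Φ.toFun (t - u) (Φ.toFun u y) = Φ.toFun t y := by
        rw [Φ.map_add (by linarith) (by linarith)]; ring_nf
      have := hdec _ huS (t - u) (by linarith)
      rw [hflow] at this
      calc g t < g u := this
        _ < g c1 + ρ := hgu
    have : g t ≤ g c1 := le_of_forall_pos_lt_add key
    linarith [hgt, hc1le]

/-- If a continuous semiflow admits a proper continuous `V` and `S ⊆ M`
such that `V` is constant on each connected component of `S`, each connected component of
`S` is isolated (open in `S`), and `V` is strictly decreasing along trajectories outside
`S`, then the chain recurrent set of `Φ` is contained in `S`. -/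
theorem chainRecurrentSet_subset_of_isolated_components
    {M : Type*} [MetricSpace M] (Φ : Semiflow M) (V : M → ℝ) (S : Set M)
    (hVcont : Continuous V)
    (hVproper : ∀ c : ℝ, IsCompact {x : M | V x ≤ c})
    (hconst : ∀ x ∈ S, ∀ y ∈ connectedComponentIn S x, V y = V x)
    (hiso : ∀ x ∈ S, ∃ U : Set M, IsOpen U ∧ U ∩ S = connectedComponentIn S x)
    (hdec : ∀ x ∉ S, ∀ t : ℝ, 0 < t → V (Φ.toFun t x) < V x) :
    Φ.chainRecurrentSet ⊆ S := by
  intro x hx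
  by_contra hxS
  have hmono := flow_mono Φ V S hVcont hconst hdec
  set c := V x with hc
  set cstar := V (Φ.toFun 1 x) with hcstar
  have hcstarlt : cstar < c := hdec x hxS 1 one_pos
  -- continuity of y ↦ Φ 1 y
  have hΦ1cont : Continuous fun y : M => Φ.toFun 1 y :=
    Φ.cont.comp (continuous_const.prodMk continuous_id)
  -- flow for time ≥ 1 decreases at least as much as time 1
  have hflowge1 : ∀ (y : M) (t : ℝ), 1 ≤ t → V (Φ.toFun t y) ≤ V (Φ.toFun 1 y) := by
    intro y t htt
    have h := Φ.map_add (s := 1) (t := t - 1) (by norm_num) (by linarith) y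
    have : Φ.toFun (t - 1) (Φ.toFun 1 y) = Φ.toFun t y := by rw [h]; ring_nf
    rw [← this]
    exact hmono _ _ (by linarith)
  -- the compact "non-decreasing" set Z
  set Z : Set M := {y | V y ≤ c ∧ V (Φ.toFun 1 y) = V y} with hZ
  have hZcompact : IsCompact Z := by
    apply IsCompact.of_isClosed_subset (hVproper c)
    · exact (isClosed_le hVcont continuous_const).inter
        (isClosed_eq (hVcont.comp hΦ1cont) hVcont)
    · intro y hy; exact hy.1
  have hZS : Z ⊆ S := by
    intro y hy
    by_contra hyS
    exact absurd hy.2 (ne_of_lt (hdec y hyS 1 one_pos))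
  -- isolating neighborhoods for points of Z
  have hU : ∀ i : Z, ∃ U : Set M, IsOpen U ∧ U ∩ S = connectedComponentIn S i.1 :=
    fun i => hiso i.1 (hZS i.2)
  choose U hUopen hUinter using hU
  have hcover : Z ⊆ ⋃ i : Z, U i := by
    intro y hy
    refine Set.mem_iUnion.mpr ⟨⟨y, hy⟩, ?_⟩
    have : y ∈ U ⟨y, hy⟩ ∩ S := by
      rw [hUinter ⟨y, hy⟩]; exact mem_connectedComponentIn (hZS hy)
    exact this.1
  obtain ⟨tfin, htfin⟩ := hZcompact.elim_finite_subcover U hUopen hcover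
  -- finitely many component values; choose [a,b] ⊆ (cstar, c) avoiding them
  set F : Finset ℝ := tfin.image (fun i => V i.1) with hF
  set F' : Finset ℝ := insert cstar (F.filter (fun v => v < c)) with hF'
  have hF'ne : F'.Nonempty := Finset.insert_nonempty _ _
  set s0 := F'.max' hF'ne with hs0
  have hallc : ∀ v ∈ F', v < c := by
    intro v hv
    rcases Finset.mem_insert.mp hv with h | h
    · rw [h]; exact hcstarlt
    · exact (Finset.mem_filter.mp h).2
  have hs0lt : s0 < c := hallc _ (F'.max'_mem hF'ne)
  have hcstarle : cstar ≤ s0 := Finset.le_max' F' cstar (Finset.mem_insert_self _ _)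
  have hFle : ∀ v ∈ F, v < c → v ≤ s0 := by
    intro v hv hvc
    exact Finset.le_max' F' v (Finset.mem_insert_of_mem (Finset.mem_filter.mpr ⟨hv, hvc⟩))
  obtain ⟨a, ha⟩ : ∃ a : ℝ, a = s0 + (c - s0) / 3 := ⟨_, rfl⟩
  obtain ⟨b, hb⟩ : ∃ b : ℝ, b = s0 + 2 * (c - s0) / 3 := ⟨_, rfl⟩
  have hab : a < b := by rw [ha, hb]; linarith
  have hs0a : s0 < a := by rw [ha]; linarith
  have hbc : b < c := by rw [hb]; linarith
  have hcstara : cstar < a := lt_of_le_of_lt hcstarle hs0a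
  -- values of components in the cover avoid [a,b]
  have havoid : ∀ i ∈ tfin, V i.1 < a ∨ b < V i.1 := by
    intro i hi
    have hvF : V i.1 ∈ F := Finset.mem_image.mpr ⟨i, hi, rfl⟩
    by_cases h : V i.1 < c
    · exact Or.inl (lt_of_le_of_lt (hFle _ hvF h) hs0a)
    · exact Or.inr (lt_of_lt_of_le hbc (not_lt.mp h))
  -- the compact band L and the uniform drop κ
  set L : Set M := {y | a ≤ V y ∧ V y ≤ b} with hL
  have hLcompact : IsCompact L := by
    apply IsCompact.of_isClosed_subset (hVproper b)
    · exact (isClosed_le continuous_const hVcont).inter (isClosed_le hVcont continuous_const)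
    · intro y hy; exact hy.2
  have hdropL : ∀ y ∈ L, V (Φ.toFun 1 y) < V y := by
    intro y hy
    rcases lt_or_eq_of_le (hmono y 1 (by norm_num)) with h | h
    · exact h
    · exfalso
      have hyZ : y ∈ Z := ⟨le_trans hy.2 hbc.le, h⟩
      obtain ⟨i, hit⟩ := Set.mem_iUnion₂.mp (htfin hyZ)
      obtain ⟨hit1, hit2⟩ := hit
      have hyC : y ∈ connectedComponentIn S i.1 := by
        rw [← hUinter i]; exact ⟨hit2, hZS hyZ⟩
      have heq := hconst i.1 (hZS i.2) y hyC
      obtain ⟨hy1, hy2⟩ := hy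
      rcases havoid i hit1 with hlt | hgt
      · linarith
      · linarith
  obtain ⟨κ, hκ0, hκ⟩ : ∃ κ > 0, ∀ y ∈ L, V (Φ.toFun 1 y) ≤ V y - κ := by
    rcases Set.eq_empty_or_nonempty L with hLe | hLne
    · exact ⟨1, one_pos, by rw [hLe]; intro y hy; exact absurd hy (Set.notMem_empty y)⟩
    · obtain ⟨y₀, hy₀L, hy₀max⟩ := hLcompact.exists_isMaxOn hLne
        (((hVcont.comp hΦ1cont).sub hVcont).continuousOn)
      have hneg : V (Φ.toFun 1 y₀) - V y₀ < 0 := sub_neg.mpr (hdropL y₀ hy₀L)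
      refine ⟨-(V (Φ.toFun 1 y₀) - V y₀), by linarith, ?_⟩
      intro y hy
      have h2 := hy₀max hy
      simp only [Function.comp_apply, Set.mem_setOf_eq, Pi.sub_apply] at h2
      linarith
  -- choose η
  obtain ⟨η, hη⟩ : ∃ η : ℝ, η = min (κ / 2) (min (b - a) (a - cstar)) := ⟨_, rfl⟩
  have hη0 : 0 < η := by
    rw [hη]; exact lt_min (by linarith) (lt_min (by linarith) (by linarith))
  have hηκ : 2 * η ≤ κ := by
    have := min_le_left (κ / 2) (min (b - a) (a - cstar)); rw [hη]; linarith
  have hηba : η ≤ b - a := by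
    have h1 := min_le_right (κ / 2) (min (b - a) (a - cstar))
    have h2 := min_le_left (b - a) (a - cstar)
    rw [hη]; linarith
  have hηac : η ≤ a - cstar := by
    have h1 := min_le_right (κ / 2) (min (b - a) (a - cstar))
    have h2 := min_le_right (b - a) (a - cstar)
    rw [hη]; linarith
  -- uniform continuity near the compact sublevel set K = {V ≤ c}
  obtain ⟨ε, hε0, hεV⟩ : ∃ ε > 0, ∀ z : M, V z ≤ c → ∀ y : M, dist y z < ε → V y < V z + η := by
    set K : Set M := {y | V y ≤ c} with hK
    set D : Set (M × M) := (fun z => (z, z)) '' K with hD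
    have hDcompact : IsCompact D := (hVproper c).image (continuous_id.prodMk continuous_id)
    set O : Set (M × M) := {p | V p.1 < V p.2 + η} with hO
    have hOopen : IsOpen O := isOpen_lt (hVcont.comp continuous_fst)
      ((hVcont.comp continuous_snd).add continuous_const)
    have hDO : D ⊆ O := by
      rintro p ⟨z, hz, rfl⟩
      simp only [hO, Set.mem_setOf_eq]; linarith
    obtain ⟨ε, hε0, hεsub⟩ := hDcompact.exists_thickening_subset_open hOopen hDO
    refine ⟨ε, hε0, ?_⟩
    intro z hz y hyz
    have hmem : (y, z) ∈ Metric.thickening ε D := by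
      rw [Metric.mem_thickening_iff]
      refine ⟨(z, z), ⟨z, hz, rfl⟩, ?_⟩
      rw [Prod.dist_eq]
      simp only [dist_self]
      exact max_lt hyz hε0
    exact hεsub hmem
  -- get a chain and derive the contradiction
  obtain ⟨n, xs, ts, hn, h0, hlast, hstep⟩ := hx ε 1 hε0 one_pos
  have key : ∀ k (hk : k < n + 1), 0 < k → V (xs ⟨k, hk⟩) ≤ a + η := by
    intro k
    induction k with
    | zero => intro _ h; exact absurd h (lt_irrefl 0)
    | succ k ih =>
      intro hk1 _
      have hkn : k < n := by omega
      obtain ⟨hti, hdist⟩ := hstep ⟨k, hkn⟩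
      have hcastSucc : (⟨k, hkn⟩ : Fin n).castSucc = ⟨k, by omega⟩ := rfl
      have hsucc : (⟨k, hkn⟩ : Fin n).succ = ⟨k + 1, hk1⟩ := rfl
      rw [hcastSucc, hsucc, dist_comm] at hdist
      have hts1 : (1 : ℝ) ≤ ts ⟨k, hkn⟩ := hti.le
      rcases Nat.eq_zero_or_pos k with hk0 | hkpos
      · -- first step: from x
        subst hk0
        have hx0 : xs ⟨0, by omega⟩ = x := by
          rw [← h0]; congr 1
        rw [hx0] at hdist
        have hzle : V (Φ.toFun (ts ⟨0, hkn⟩) x) ≤ cstar := hflowge1 x _ hts1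
        have := hεV _ (le_trans hzle (by linarith)) _ hdist
        linarith
      · have hw := ih (by omega) hkpos
        rcases lt_or_ge (V (xs ⟨k, by omega⟩)) a with hwa | hwa
        · -- below the band: flow does not increase V
          have hzle : V (Φ.toFun (ts ⟨k, hkn⟩) (xs ⟨k, by omega⟩)) ≤ V (xs ⟨k, by omega⟩) :=
            hmono _ _ (by linarith)
          have := hεV _ (by linarith) _ hdist
          linarith
        · -- in the band: uniform drop κ
          have hyL : xs ⟨k, by omega⟩ ∈ L := ⟨hwa, by linarith⟩
          have hzle : V (Φ.toFun (ts ⟨k, hkn⟩) (xs ⟨k, by omega⟩)) ≤ V (xs ⟨k, by omega⟩) - κ :=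
            le_trans (hflowge1 _ _ hts1) (hκ _ hyL)
          have := hεV _ (by linarith) _ hdist
          linarith
  have hfin : V (xs ⟨n, by omega⟩) ≤ a + η := key n (by omega) hn
  have hlast' : xs ⟨n, by omega⟩ = x := by rw [← hlast]; congr 1
  rw [hlast'] at hfin
  linarith
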